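/- Let G = ⟨a, b | a²b⁻²ab⁻²a²ba²baba²b = 1⟩, μ = b⁻²ab⁻²ab⁻¹, λ = a⁻²b⁻¹a⁻²b. Then the quotient group G/⟨⟨μ, λ⟩⟩ (the quotient by the normal closure of μ and λ) is isomorphic to ℤ/10ℤ. -/

import Mathlib

/-- The single relator `a²b⁻²ab⁻²a²ba²baba²b` of the presentation of `π₁(v2503)`,
with `a`, `b` the generators of the free group on two letters. -/
def rel2503 : FreeGroup (Fin 2) :=
  let a : FreeGroup (Fin 2) := FreeGroup.of 0
  let b : FreeGroup (Fin 2) := FreeGroup.of 1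
  a ^ 2 * b⁻¹ ^ 2 * a * b⁻¹ ^ 2 * a ^ 2 * b * a ^ 2 * b * a * b * a ^ 2 * b

/-- The fundamental group of `v2503`: `⟨a, b | a²b⁻²ab⁻²a²ba²baba²b = 1⟩`. -/
abbrev G2503 : Type := PresentedGroup ({rel2503} : Set (FreeGroup (Fin 2)))

/-- The generator `a`. -/
def ga : G2503 := PresentedGroup.of 0
/-- The generator `b`. -/
def gb : G2503 := PresentedGroup.of 1

/-- `x = b⁻²a`. -/
def gx : G2503 := gb⁻¹ ^ 2 * ga
/-- `y = ba²`. -/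
def gy : G2503 := gb * ga ^ 2
/-- The homological meridian `μ = b⁻²ab⁻²ab⁻¹`. -/
def gmu : G2503 := gb⁻¹ ^ 2 * ga * gb⁻¹ ^ 2 * ga * gb⁻¹
/-- The homological longitude `λ = a⁻²b⁻¹a⁻²b`. -/
def glam : G2503 := ga⁻¹ ^ 2 * gb⁻¹ * ga⁻¹ ^ 2 * gb

/-- The relator holds in `G2503`. -/
lemma rel_holds_v2503 :
    ga ^ 2 * gb⁻¹ ^ 2 * ga * gb⁻¹ ^ 2 * ga ^ 2 * gb * ga ^ 2 * gb * ga * gb * ga ^ 2 * gb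
      = 1 := by
  have h : (QuotientGroup.mk rel2503 : G2503) = 1 :=
    (QuotientGroup.eq_one_iff _).mpr (Subgroup.subset_normalClosure rfl)
  rw [rel2503] at h
  exact h

/-- The images of the generators in `ℤ/10`. -/
def fvals2503 : Fin 2 → Multiplicative (ZMod 10) :=
  ![Multiplicative.ofAdd 5, Multiplicative.ofAdd 2]

lemma fvals2503_rel : ∀ r ∈ ({rel2503} : Set (FreeGroup (Fin 2))),
    FreeGroup.lift fvals2503 r = 1 := by
  rintro r hr
  rw [Set.mem_singleton_iff] at hr
  subst hr
  simp only [rel2503, map_mul, map_pow, map_inv, FreeGroup.lift_apply_of, fvals2503,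
    Matrix.cons_val_zero, Matrix.cons_val_one, Matrix.head_cons]
  decide

/-- The abelianization-style map `G2503 →* ℤ/10`, `a ↦ 5`, `b ↦ 2`. -/
noncomputable def f2503 : G2503 →* Multiplicative (ZMod 10) :=
  PresentedGroup.toGroup fvals2503_rel

lemma f2503_ga : f2503 ga = Multiplicative.ofAdd 5 := PresentedGroup.toGroup.of _
lemma f2503_gb : f2503 gb = Multiplicative.ofAdd 2 := PresentedGroup.toGroup.of _

lemma f2503_gmu : f2503 gmu = 1 := by
  simp only [gmu, map_mul, map_pow, map_inv, f2503_ga, f2503_gb]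
  decide

lemma f2503_glam : f2503 glam = 1 := by
  simp only [glam, map_mul, map_pow, map_inv, f2503_ga, f2503_gb]
  decide

lemma f2503_gx : f2503 gx = Multiplicative.ofAdd 1 := by
  simp only [gx, map_mul, map_pow, map_inv, f2503_ga, f2503_gb]
  decide

/-- The quotient of `π₁(v2503)` by the normal closure of `{μ, λ}` is isomorphic
to `ℤ/10ℤ`. -/
theorem quotient_peripheral_v2503 :
    Nonempty ((G2503 ⧸ Subgroup.normalClosure ({gmu, glam} : Set G2503)) ≃*
      Multiplicative (ZMod 10)) := by
  set N := Subgroup.normalClosure ({gmu, glam} : Set G2503) with hN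
  let π : G2503 →* G2503 ⧸ N := QuotientGroup.mk' N
  set A : G2503 ⧸ N := π ga with hA0
  set B : G2503 ⧸ N := π gb with hB0
  set X : G2503 ⧸ N := π gx with hX0
  have hgx : X = B⁻¹ ^ 2 * A := by
    rw [hX0, hA0, hB0, gx, map_mul, map_pow, map_inv]
  -- the three relations in the quotient
  have hmu1 : π gmu = 1 := (QuotientGroup.eq_one_iff _).mpr
    (Subgroup.subset_normalClosure (by simp))
  have hlam1 : π glam = 1 := (QuotientGroup.eq_one_iff _).mpr
    (Subgroup.subset_normalClosure (by simp))
  have hM : B⁻¹ ^ 2 * A * B⁻¹ ^ 2 * A * B⁻¹ = 1 := by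
    have := hmu1
    simp only [gmu, map_mul, map_pow, map_inv] at this
    rw [hA0, hB0]
    exact this
  have hL : A⁻¹ ^ 2 * B⁻¹ * A⁻¹ ^ 2 * B = 1 := by
    have := hlam1
    simp only [glam, map_mul, map_pow, map_inv] at this
    rw [hA0, hB0]
    exact this
  have hR : A ^ 2 * B⁻¹ ^ 2 * A * B⁻¹ ^ 2 * A ^ 2 * B * A ^ 2 * B * A * B * A ^ 2 * B
      = 1 := by
    have := congrArg π rel_holds_v2503
    simp only [map_mul, map_pow, map_inv, map_one] at this
    rw [hA0, hB0]
    exact this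
  -- algebraic consequences
  have hX2 : X ^ 2 = B := by
    have h : X ^ 2 * B⁻¹ = 1 := by
      have e : X ^ 2 * B⁻¹ = B⁻¹ ^ 2 * A * B⁻¹ ^ 2 * A * B⁻¹ := by
        rw [hgx]; simp only [pow_two]; group
      rw [e]; exact hM
    calc X ^ 2 = X ^ 2 * B⁻¹ * B := by group
    _ = B := by rw [h]; group
  have hA : A = X ^ 5 := by
    calc A = B ^ 2 * (B⁻¹ ^ 2 * A) := by group
    _ = (X ^ 2) ^ 2 * X := by rw [← hgx, ← hX2]
    _ = X ^ 5 := by group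
  have hX20 : X ^ 20 = 1 := by
    have h : (X ^ 5)⁻¹ ^ 2 * (X ^ 2)⁻¹ * (X ^ 5)⁻¹ ^ 2 * X ^ 2 = 1 := by
      rw [← hA, hX2]; exact hL
    calc X ^ 20 = ((X ^ 5)⁻¹ ^ 2 * (X ^ 2)⁻¹ * (X ^ 5)⁻¹ ^ 2 * X ^ 2)⁻¹ := by group
    _ = 1 := by rw [h, inv_one]
  have hX50 : X ^ 50 = 1 := by
    have h : (X ^ 5) ^ 2 * (X ^ 2)⁻¹ ^ 2 * X ^ 5 * (X ^ 2)⁻¹ ^ 2 * (X ^ 5) ^ 2 * X ^ 2 *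
        (X ^ 5) ^ 2 * X ^ 2 * X ^ 5 * X ^ 2 * (X ^ 5) ^ 2 * X ^ 2 = 1 := by
      rw [← hA, hX2]; exact hR
    calc X ^ 50 = (X ^ 5) ^ 2 * (X ^ 2)⁻¹ ^ 2 * X ^ 5 * (X ^ 2)⁻¹ ^ 2 * (X ^ 5) ^ 2 * X ^ 2 *
        (X ^ 5) ^ 2 * X ^ 2 * X ^ 5 * X ^ 2 * (X ^ 5) ^ 2 * X ^ 2 := by group
    _ = 1 := h
  have hX10 : X ^ 10 = 1 := by
    calc X ^ 10 = X ^ 50 * (X ^ 20)⁻¹ * (X ^ 20)⁻¹ := by group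
    _ = 1 := by rw [hX20, hX50]; group
  -- the forward map
  have hker : ∀ x ∈ N, f2503 x = 1 := by
    intro x hx
    have hsub : ({gmu, glam} : Set G2503) ⊆ (f2503.ker : Set G2503) := by
      rintro y (rfl | rfl)
      · exact f2503_gmu
      · exact f2503_glam
    exact (Subgroup.normalClosure_le_normal hsub) hx
  let f : (G2503 ⧸ N) →* Multiplicative (ZMod 10) := QuotientGroup.lift N f2503 hker
  have hf : ∀ w : G2503, f (π w) = f2503 w := fun w => rfl
  -- the backward map
  have h10 : (zmultiplesHom (Additive (G2503 ⧸ N)) (Additive.ofMul X)) (10 : ℤ) = 0 := by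
    show (10 : ℤ) • Additive.ofMul X = 0
    have hX10' : X ^ (10 : ℤ) = 1 := by
      rw [show ((10 : ℤ)) = ((10 : ℕ) : ℤ) from rfl, zpow_natCast, hX10]
    rw [← ofMul_zpow, hX10']
    rfl
  let g : Multiplicative (ZMod 10) →* (G2503 ⧸ N) :=
    AddMonoidHom.toMultiplicativeLeft
      (ZMod.lift 10 ⟨zmultiplesHom (Additive (G2503 ⧸ N)) (Additive.ofMul X), h10⟩)
  have hg : ∀ k : ℤ, g (Multiplicative.ofAdd ((k : ZMod 10))) = X ^ k := by
    intro k
    show Additive.toMul ((ZMod.lift 10 ⟨_, h10⟩) ((k : ZMod 10))) = X ^ k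
    rw [ZMod.lift_coe]
    show Additive.toMul (k • Additive.ofMul X) = X ^ k
    rw [← ofMul_zpow]
    rfl
  -- left inverse
  have hlA : g (f (π ga)) = π ga := by
    rw [hf, f2503_ga, show (5 : ZMod 10) = ((5 : ℤ) : ZMod 10) by norm_num, hg,
      show X ^ (5 : ℤ) = X ^ 5 by rw [show ((5 : ℤ)) = ((5 : ℕ) : ℤ) from rfl, zpow_natCast], ← hA]
  have hlB : g (f (π gb)) = π gb := by
    rw [hf, f2503_gb, show (2 : ZMod 10) = ((2 : ℤ) : ZMod 10) by norm_num, hg,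
      show X ^ (2 : ℤ) = X ^ 2 by rw [show ((2 : ℤ)) = ((2 : ℕ) : ℤ) from rfl, zpow_natCast], hX2]
  have li : Function.LeftInverse g f := by
    intro q
    obtain ⟨w, rfl⟩ := QuotientGroup.mk'_surjective N q
    obtain ⟨z, rfl⟩ := QuotientGroup.mk'_surjective
      (Subgroup.normalClosure ({rel2503} : Set (FreeGroup (Fin 2)))) w
    have key : ((g.comp f).comp (π.comp (QuotientGroup.mk' _))) =
        π.comp (QuotientGroup.mk' _) := by
      apply FreeGroup.ext_hom
      intro x
      fin_cases x
      · exact hlA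
      · exact hlB
    exact DFunLike.congr_fun key z
  -- right inverse
  have ri : Function.RightInverse g f := by
    intro m
    have hm : m = Multiplicative.ofAdd (((m.toAdd.val : ℤ) : ZMod 10)) := by
      simp [ZMod.natCast_val, ZMod.cast_id]
    rw [hm, hg, map_zpow]
    have hfx : f X = Multiplicative.ofAdd (1 : ZMod 10) := by
      rw [hX0, hf, f2503_gx]
    rw [hfx, ← ofAdd_zsmul]
    simp [ZMod.natCast_val, ZMod.cast_id]
  exact ⟨MulEquiv.mk (Equiv.mk ⇑f ⇑g li ri) (map_mul f)⟩
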